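/- The spherical QST constant is at most the Euclidean QST constant: if γ ∈ (0,1] is such that for every d ≥ 2 and every C ⊆ S^d with C(e_{d+1},ρ) ⊆ sconv(C) (ρ ∈ (0,π/2)) there exist at most 2d points C' ⊆ C with C(e_{d+1}, γρ) ⊆ sconv(C'), then for every Q ⊆ ℝ^d with B(o,1) ⊆ conv(Q) there exist at most 2d points Q' ⊆ Q with B(o, γ') ⊆ conv(Q') for every γ' < γ. -/

import Mathlib

open Real Set
open scoped RealInnerProductSpace

noncomputable section

/-- Euclidean space `ℝ^n`. -/
abbrev E (n : ℕ) := EuclideanSpace ℝ (Fin n)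

/-- The unit sphere `S^{n-1} ⊆ ℝ^n`. -/
def unitSphere (n : ℕ) : Set (E n) := Metric.sphere 0 1

/-- The spherical cap with center `v` and spherical radius `ρ`. -/
def cap {n : ℕ} (v : E n) (ρ : ℝ) : Set (E n) := {u ∈ unitSphere n | Real.cos ρ ≤ ⟪u, v⟫}

/-- The last standard basis vector `e_{d+1}` of `ℝ^{d+1}`. -/
def eLast (d : ℕ) : E (d + 1) := EuclideanSpace.single (Fin.last d) 1

/-- Central projection from the origin onto the hyperplane `{x : x_{d+1} = 1}`,
identified with `ℝ^d` (with origin `e_{d+1}`). -/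
def PN {d : ℕ} (x : E (d + 1)) : E d := WithLp.toLp 2 (fun i : Fin d => x i.castSucc / x (Fin.last d))

/-- Points of the shorter great-circle arc between unit vectors `u` and `v`
(for `u`, `v` in an open hemisphere): normalized nonnegative combinations. -/
def arcPts {n : ℕ} (u v : E n) : Set (E n) :=
  {w | ∃ a b : ℝ, 0 ≤ a ∧ 0 ≤ b ∧ a • u + b • v ≠ 0 ∧ w = ‖a • u + b • v‖⁻¹ • (a • u + b • v)}

/-- A set `K ⊆ S^{n-1}` is spherically convex if it is the whole sphere, or it is
contained in an open hemisphere and contains the shorter arc between any two of its points. -/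
def IsSphConvex {n : ℕ} (K : Set (E n)) : Prop :=
  K = unitSphere n ∨
    ((∃ v : E n, ∀ x ∈ K, 0 < ⟪x, v⟫) ∧ ∀ u ∈ K, ∀ w ∈ K, arcPts u w ⊆ K)

/-- The spherical convex hull: the intersection of all spherically convex subsets
of the sphere containing `C`. -/
def sconv {n : ℕ} (C : Set (E n)) : Set (E n) :=
  ⋂₀ {K | IsSphConvex K ∧ K ⊆ unitSphere n ∧ C ⊆ K}

/-- The polar of a set `S ⊆ ℝ^n`. -/
def polar {n : ℕ} (S : Set (E n)) : Set (E n) := {x | ∀ s ∈ S, ⟪x, s⟫ ≤ 1}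

end

section Basics
open Real Set
open scoped RealInnerProductSpace

noncomputable section

variable {n d : ℕ}

lemma E_sum_apply {ι : Type*} (s : Finset ι) (f : ι → E n) (j : Fin n) :
    (∑ i ∈ s, f i) j = ∑ i ∈ s, f i j := by
  classical
  induction s using Finset.induction_on with
  | empty => rfl
  | @insert a s h ih => simp [Finset.sum_insert h, ih]

/-- append a last coordinate 1 -/
def raw (z : E d) : E (d + 1) :=
  (WithLp.equiv 2 (Fin (d + 1) → ℝ)).symm (Fin.snoc (WithLp.equiv 2 (Fin d → ℝ) z) 1)

@[simp] lemma raw_castSucc (z : E d) (i : Fin d) : raw z i.castSucc = z i := by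
  simp [raw, WithLp.equiv_symm_apply, PiLp.toLp_apply, Fin.snoc_castSucc]

@[simp] lemma raw_last (z : E d) : raw z (Fin.last d) = 1 := by
  simp [raw, WithLp.equiv_symm_apply, PiLp.toLp_apply]

@[simp] lemma inner_eLast (x : E (d + 1)) : ⟪x, eLast d⟫ = x (Fin.last d) := by
  simp [eLast, EuclideanSpace.inner_single_right]

lemma raw_ne_zero (z : E d) : raw z ≠ 0 := by
  intro h
  have : raw z (Fin.last d) = 0 := by rw [h]; rfl
  simp at this

lemma norm_raw (z : E d) : ‖raw z‖ = Real.sqrt (‖z‖ ^ 2 + 1) := by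
  have h1 : ‖z‖ ^ 2 = ∑ i, ‖z i‖ ^ 2 := by
    rw [EuclideanSpace.norm_eq, Real.sq_sqrt (by positivity)]
  rw [EuclideanSpace.norm_eq, Fin.sum_univ_castSucc]
  simp [h1]

lemma one_le_sqrt_sq_add_one (z : E d) : 1 ≤ Real.sqrt (‖z‖ ^ 2 + 1) := by
  have h := Real.sq_sqrt (show (0:ℝ) ≤ ‖z‖ ^ 2 + 1 by positivity)
  nlinarith [Real.sqrt_nonneg (‖z‖ ^ 2 + 1), sq_nonneg ‖z‖]

lemma norm_raw_pos (z : E d) : 0 < ‖raw z‖ := norm_pos_iff.2 (raw_ne_zero z)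

end
end Basics
section Lift
open Real Set
open scoped RealInnerProductSpace
noncomputable section
variable {n d : ℕ}

/-- normalized lift to the sphere -/
def lift (z : E d) : E (d + 1) := ‖raw z‖⁻¹ • raw z

lemma norm_lift (z : E d) : ‖lift z‖ = 1 := by
  rw [lift, norm_smul, norm_inv, norm_norm, inv_mul_cancel₀ (norm_raw_pos z).ne']

lemma lift_mem_sphere (z : E d) : lift z ∈ unitSphere (d + 1) :=
  mem_sphere_zero_iff_norm.2 (norm_lift z)

lemma inner_lift_eLast (z : E d) : ⟪lift z, eLast d⟫ = (Real.sqrt (‖z‖ ^ 2 + 1))⁻¹ := by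
  rw [lift, real_inner_smul_left, inner_eLast, raw_last, mul_one, norm_raw]

lemma inner_lift_eLast_pos (z : E d) : 0 < ⟪lift z, eLast d⟫ := by
  rw [inner_lift_eLast]
  have := one_le_sqrt_sq_add_one z
  positivity

lemma PN_smul (x : E (d + 1)) {s : ℝ} (hs : s ≠ 0) : PN (s • x) = PN x := by
  ext i
  simp only [PN, PiLp.toLp_apply, PiLp.smul_apply, smul_eq_mul]
  rw [mul_div_mul_left _ _ hs]

lemma PN_raw (z : E d) : PN (raw z) = z := by
  ext i
  simp [PN]

lemma PN_lift (z : E d) : PN (lift z) = z := by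
  rw [lift, PN_smul _ (inv_ne_zero (norm_raw_pos z).ne'), PN_raw]

lemma sqrt_tan_sq_add_one {θ : ℝ} (hθ : θ ∈ Set.Ioo 0 (π / 2)) :
    Real.sqrt (Real.tan θ ^ 2 + 1) = (Real.cos θ)⁻¹ := by
  have hc : 0 < Real.cos θ := Real.cos_pos_of_mem_Ioo ⟨by linarith [hθ.1, Real.pi_pos], hθ.2⟩
  have h : Real.tan θ ^ 2 + 1 = ((Real.cos θ)⁻¹) ^ 2 := by
    rw [Real.tan_eq_sin_div_cos]
    field_simp
    try nlinarith [Real.sin_sq_add_cos_sq θ]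
  rw [h, Real.sqrt_sq (by positivity)]

lemma cap_lift_iff {θ : ℝ} (hθ : θ ∈ Set.Ioo 0 (π / 2)) (z : E d) :
    lift z ∈ cap (eLast d) θ ↔ ‖z‖ ≤ Real.tan θ := by
  have hc : 0 < Real.cos θ := Real.cos_pos_of_mem_Ioo ⟨by linarith [hθ.1, Real.pi_pos], hθ.2⟩
  have ht : 0 < Real.tan θ := Real.tan_pos_of_pos_of_lt_pi_div_two hθ.1 hθ.2
  have hs1 : (0:ℝ) < Real.sqrt (‖z‖ ^ 2 + 1) := lt_of_lt_of_le one_pos (one_le_sqrt_sq_add_one z)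
  constructor
  · rintro ⟨-, h⟩
    rw [inner_lift_eLast] at h
    have h2 : Real.sqrt (‖z‖ ^ 2 + 1) ≤ (Real.cos θ)⁻¹ := by
      have := inv_anti₀ hc h
      rwa [inv_inv] at this
    rw [← sqrt_tan_sq_add_one hθ] at h2
    have h3 : ‖z‖ ^ 2 + 1 ≤ Real.tan θ ^ 2 + 1 :=
      (Real.sqrt_le_sqrt_iff (by positivity)).mp h2
    nlinarith [norm_nonneg z]
  · intro h
    refine ⟨lift_mem_sphere z, ?_⟩
    rw [inner_lift_eLast]
    have h2 : Real.sqrt (‖z‖ ^ 2 + 1) ≤ (Real.cos θ)⁻¹ := by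
      rw [← sqrt_tan_sq_add_one hθ]
      apply Real.sqrt_le_sqrt
      nlinarith [norm_nonneg z]
    calc Real.cos θ = ((Real.cos θ)⁻¹)⁻¹ := (inv_inv _).symm
      _ ≤ (Real.sqrt (‖z‖ ^ 2 + 1))⁻¹ := by
          exact inv_anti₀ hs1 h2

end
end Lift
section Sconv
open Real Set
open scoped RealInnerProductSpace
noncomputable section
variable {n d : ℕ}

/-- In a spherically convex subset of the sphere, normalized nonnegative combinations
of finitely many elements stay inside. -/
lemma normCombo_mem {K : Set (E n)} (hK : IsSphConvex K) (hKs : K ⊆ unitSphere n)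
    {ι : Type*} (t : Finset ι) (f : ι → E n) (w : ι → ℝ)
    (hw : ∀ i ∈ t, 0 ≤ w i) (hf : ∀ i ∈ t, f i ∈ K) {x : E n}
    (hx : x = ∑ i ∈ t, w i • f i) (hx0 : x ≠ 0) : ‖x‖⁻¹ • x ∈ K := by
  classical
  rcases hK with hK | ⟨-, harc⟩
  · rw [hK]
    exact mem_sphere_zero_iff_norm.2
      (by rw [norm_smul, norm_inv, norm_norm, inv_mul_cancel₀ (norm_pos_iff.2 hx0).ne'])
  · induction t using Finset.induction_on generalizing x with
    | empty => simp at hx; exact absurd hx hx0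
    | @insert a s ha ih =>
      rw [Finset.sum_insert ha] at hx
      set y := ∑ i ∈ s, w i • f i with hy
      have hfa : f a ∈ K := hf a (Finset.mem_insert_self a s)
      have hna : ‖f a‖ = 1 := mem_sphere_zero_iff_norm.1 (hKs hfa)
      have hwa : 0 ≤ w a := hw a (Finset.mem_insert_self a s)
      by_cases hy0 : y = 0
      · rw [hy0, add_zero] at hx
        have hwa' : w a ≠ 0 := by
          intro h0; rw [h0, zero_smul] at hx; exact hx0 hx
        have : ‖x‖ = w a := by
          rw [hx, norm_smul, hna, mul_one, Real.norm_eq_abs, abs_of_nonneg hwa]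
        rw [this, hx, smul_smul, inv_mul_cancel₀ hwa', one_smul]
        exact hfa
      · have hu' : ‖y‖⁻¹ • y ∈ K :=
          ih (fun i hi => hw i (Finset.mem_insert_of_mem hi))
            (fun i hi => hf i (Finset.mem_insert_of_mem hi)) rfl hy0
        have key : w a • f a + ‖y‖ • (‖y‖⁻¹ • y) = x := by
          rw [smul_smul, mul_inv_cancel₀ (norm_pos_iff.2 hy0).ne', one_smul, hx]
        exact harc (f a) hfa (‖y‖⁻¹ • y) hu'
          ⟨w a, ‖y‖, hwa, norm_nonneg y, by rw [key]; exact hx0, by rw [key]⟩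

/-- Upper bound: the spherical hull of a finite set in the upper open hemisphere
consists of normalized nonnegative combinations. -/
lemma inner_combo_pos (C' : Finset (E (d + 1)))
    (hpos : ∀ c ∈ C', 0 < ⟪c, eLast d⟫) (w : E (d + 1) → ℝ) (hw : ∀ c, 0 ≤ w c)
    (hne : (∑ c ∈ C', w c • c) ≠ 0) : 0 < ⟪∑ c ∈ C', w c • c, eLast d⟫ := by
  rw [sum_inner]
  apply Finset.sum_pos'
  · intro c hc
    rw [real_inner_smul_left]
    exact mul_nonneg (hw c) (hpos c hc).le
  · by_contra hcon
    push_neg at hcon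
    apply hne
    apply Finset.sum_eq_zero
    intro c hc
    have h2 := hcon c hc
    rw [real_inner_smul_left] at h2
    have hwc : w c = 0 := by
      rcases (hw c).lt_or_eq with h | h
      · exact absurd (mul_pos h (hpos c hc)) (by linarith)
      · exact h.symm
    rw [hwc, zero_smul]

lemma sconv_finset_subset (C' : Finset (E (d + 1)))
    (hpos : ∀ c ∈ C', 0 < ⟪c, eLast d⟫) (hs : (C' : Set (E (d + 1))) ⊆ unitSphere (d + 1)) :
    sconv (C' : Set (E (d + 1))) ⊆
      {u | ∃ w : E (d + 1) → ℝ, (∀ c, 0 ≤ w c) ∧ (∑ c ∈ C', w c • c) ≠ 0 ∧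
        u = ‖∑ c ∈ C', w c • c‖⁻¹ • ∑ c ∈ C', w c • c} := by
  classical
  set K₀ : Set (E (d + 1)) := {u | ∃ w : E (d + 1) → ℝ, (∀ c, 0 ≤ w c) ∧
      (∑ c ∈ C', w c • c) ≠ 0 ∧ u = ‖∑ c ∈ C', w c • c‖⁻¹ • ∑ c ∈ C', w c • c} with hK₀
  have hinner := inner_combo_pos C' hpos
  apply Set.sInter_subset_of_mem
  refine ⟨?_, ?_, ?_⟩
  · right
    constructor
    · refine ⟨eLast d, ?_⟩
      rintro x ⟨w, hw, hne, rfl⟩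
      rw [real_inner_smul_left]
      exact mul_pos (inv_pos.2 (norm_pos_iff.2 hne)) (hinner w hw hne)
    · rintro u ⟨wu, hwu, hneu, rfl⟩ v ⟨wv, hwv, hnev, rfl⟩ p ⟨a, b, ha, hb, hne, rfl⟩
      set xu := ∑ c ∈ C', wu c • c
      set xv := ∑ c ∈ C', wv c • c
      set W : E (d + 1) → ℝ := fun c => a * ‖xu‖⁻¹ * wu c + b * ‖xv‖⁻¹ * wv c with hW
      have h1 : a • (‖xu‖⁻¹ • xu) = ∑ c ∈ C', (a * ‖xu‖⁻¹ * wu c) • c := by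
        rw [smul_smul, Finset.smul_sum]
        exact Finset.sum_congr rfl fun c _ => by rw [smul_smul, mul_assoc]
      have h2 : b • (‖xv‖⁻¹ • xv) = ∑ c ∈ C', (b * ‖xv‖⁻¹ * wv c) • c := by
        rw [smul_smul, Finset.smul_sum]
        exact Finset.sum_congr rfl fun c _ => by rw [smul_smul, mul_assoc]
      have hsum : ∑ c ∈ C', W c • c = a • (‖xu‖⁻¹ • xu) + b • (‖xv‖⁻¹ • xv) := by
        rw [h1, h2, ← Finset.sum_add_distrib]
        exact Finset.sum_congr rfl fun c _ => add_smul _ _ _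
      refine ⟨W, ?_, ?_, ?_⟩
      · intro c
        have := norm_nonneg xu
        have := norm_nonneg xv
        have := hwu c
        have := hwv c
        positivity
      · rw [hsum]; exact hne
      · rw [hsum]
  · rintro u ⟨w, hw, hne, rfl⟩
    exact mem_sphere_zero_iff_norm.2
      (by rw [norm_smul, norm_inv, norm_norm, inv_mul_cancel₀ (norm_pos_iff.2 hne).ne'])
  · intro c hc
    have hc' : c ∈ C' := hc
    refine ⟨fun c' => if c' = c then 1 else 0, fun c' => by positivity, ?_, ?_⟩ <;>
    · have hsum : ∑ c' ∈ C', (if c' = c then (1:ℝ) else 0) • c' = c :=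
          (Finset.sum_eq_single c (fun b _ hbc => by simp [hbc])
            (fun h => absurd hc' h)).trans (by simp)
      rw [hsum]
      first
        | exact fun h => by simpa [h] using hpos c hc'
        | rw [mem_sphere_zero_iff_norm.1 (hs hc), inv_one, one_smul]
end
end Sconv
section Bridge
open Real Set
open scoped RealInnerProductSpace
noncomputable section
variable {n d : ℕ}

lemma inner_combo (C' : Finset (E (d + 1))) (w : E (d + 1) → ℝ) :
    ⟪∑ c ∈ C', w c • c, eLast d⟫ = ∑ c ∈ C', w c * ⟪c, eLast d⟫ := by
  rw [sum_inner]
  exact Finset.sum_congr rfl fun c _ => real_inner_smul_left _ _ _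

lemma PN_combo_mem_convexHull (C' : Finset (E (d + 1)))
    (hpos : ∀ c ∈ C', 0 < ⟪c, eLast d⟫) (w : E (d + 1) → ℝ) (hw : ∀ c, 0 ≤ w c)
    (hne : (∑ c ∈ C', w c • c) ≠ 0) :
    PN (∑ c ∈ C', w c • c) ∈ convexHull ℝ (PN '' (C' : Set (E (d + 1)))) := by
  classical
  set x := ∑ c ∈ C', w c • c with hx
  have hS : 0 < ⟪x, eLast d⟫ := inner_combo_pos C' hpos w hw hne
  set S := ⟪x, eLast d⟫ with hSdef
  have hSval : S = ∑ c ∈ C', w c * ⟪c, eLast d⟫ := inner_combo C' w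
  set μ : E (d + 1) → ℝ := fun c => w c * ⟪c, eLast d⟫ / S with hμ
  have hμnn : ∀ c ∈ C', 0 ≤ μ c := fun c hc =>
    div_nonneg (mul_nonneg (hw c) (hpos c hc).le) hS.le
  have hμ1 : ∑ c ∈ C', μ c = 1 := by
    rw [hμ, ← Finset.sum_div, ← hSval, div_self hS.ne']
  have hmem := Finset.centerMass_mem_convexHull (s := PN '' (C' : Set (E (d + 1))))
    C' hμnn (by rw [hμ1]; exact one_pos) (z := PN)
    (fun c hc => Set.mem_image_of_mem PN hc)
  rw [Finset.centerMass_eq_of_sum_1 _ _ hμ1] at hmem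
  have heq : ∑ c ∈ C', μ c • PN c = PN x := by
    have hxlast : x (Fin.last d) = S := by rw [hSdef, inner_eLast]
    ext i
    rw [E_sum_apply]
    have hxi : x i.castSucc = ∑ c ∈ C', w c * c i.castSucc := by
      rw [hx, E_sum_apply]
      exact Finset.sum_congr rfl fun c _ => rfl
    show _ = x i.castSucc / x (Fin.last d)
    rw [hxlast, hxi, Finset.sum_div]
    refine Finset.sum_congr rfl fun c hc => ?_
    have hcl : 0 < c (Fin.last d) := by rw [← inner_eLast c]; exact hpos c hc
    show μ c * (c i.castSucc / c (Fin.last d)) = w c * c i.castSucc / S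
    simp only [hμ, inner_eLast]
    field_simp
  rwa [heq] at hmem

end
end Bridge
section DirA
open Real Set
open scoped RealInnerProductSpace Pointwise
noncomputable section
variable {n d : ℕ}

lemma cap_elem_eq_lift {θ : ℝ} (hθ : θ ∈ Set.Ioo 0 (π / 2)) {u : E (d + 1)}
    (hu : u ∈ cap (eLast d) θ) : u = lift (PN u) := by
  obtain ⟨hu1, hu2⟩ := hu
  have hn1 : ‖u‖ = 1 := mem_sphere_zero_iff_norm.1 hu1
  have hc : 0 < Real.cos θ := Real.cos_pos_of_mem_Ioo ⟨by linarith [hθ.1, Real.pi_pos], hθ.2⟩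
  have hul : 0 < u (Fin.last d) := by rw [← inner_eLast u]; linarith
  have hraw : raw (PN u) = (u (Fin.last d))⁻¹ • u := by
    ext j
    induction j using Fin.lastCases with
    | last =>
      rw [raw_last]
      show 1 = (u (Fin.last d))⁻¹ * u (Fin.last d)
      rw [inv_mul_cancel₀ hul.ne']
    | cast i =>
      rw [raw_castSucc]
      show u i.castSucc / u (Fin.last d) = (u (Fin.last d))⁻¹ * u i.castSucc
      rw [div_eq_inv_mul]
  have hnr : ‖raw (PN u)‖ = (u (Fin.last d))⁻¹ := by
    rw [hraw, norm_smul, hn1, mul_one, norm_inv, Real.norm_eq_abs, abs_of_pos hul]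
  rw [lift, hnr, hraw, smul_smul, inv_inv, mul_inv_cancel₀ hul.ne', one_smul]

lemma raw_combo {ι : Type*} (t : Finset ι) (w : ι → ℝ) (zf : ι → E d)
    (hw1 : ∑ i ∈ t, w i = 1) {z : E d} (hz : z = ∑ i ∈ t, w i • zf i) :
    raw z = ∑ i ∈ t, w i • raw (zf i) := by
  ext j
  rw [E_sum_apply]
  induction j using Fin.lastCases with
  | last =>
    rw [raw_last]
    have : ∀ i ∈ t, (w i • raw (zf i)) (Fin.last d) = w i := by
      intro i _
      show w i * raw (zf i) (Fin.last d) = w i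
      rw [raw_last, mul_one]
    rw [Finset.sum_congr rfl this, hw1]
  | cast i =>
    rw [raw_castSucc, hz, E_sum_apply]
    refine Finset.sum_congr rfl fun k _ => ?_
    show w k * zf k i = w k * raw (zf k) i.castSucc
    rw [raw_castSucc]

lemma cap_subset_sconv (Q : Set (E d)) (hQ : Metric.closedBall 0 1 ⊆ convexHull ℝ Q)
    {ρ : ℝ} (hρ : ρ ∈ Set.Ioo 0 (π / 2)) :
    cap (eLast d) ρ ⊆ sconv ((fun q => lift (Real.tan ρ • q)) '' Q) := by
  intro u hu
  have htan : 0 < Real.tan ρ := Real.tan_pos_of_pos_of_lt_pi_div_two hρ.1 hρ.2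
  set z := PN u with hzdef
  have hz : u = lift z := cap_elem_eq_lift hρ hu
  have hnz : ‖z‖ ≤ Real.tan ρ := (cap_lift_iff hρ z).mp (hz ▸ hu)
  have hmem1 : (Real.tan ρ)⁻¹ • z ∈ Metric.closedBall (0 : E d) 1 := by
    rw [mem_closedBall_zero_iff, norm_smul, norm_inv, Real.norm_eq_abs, abs_of_pos htan]
    rw [inv_mul_le_iff₀ htan, mul_one]
    exact hnz
  have hmem2 : z ∈ convexHull ℝ (Real.tan ρ • Q) := by
    rw [convexHull_smul]
    have := Set.smul_mem_smul_set (a := Real.tan ρ) (hQ hmem1)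
    rwa [smul_smul, mul_inv_cancel₀ htan.ne', one_smul] at this
  rw [convexHull_eq] at hmem2
  obtain ⟨ι, t, w, zf, hw0, hw1, hzf, hcM⟩ := hmem2
  have hsum : z = ∑ i ∈ t, w i • zf i := by
    rw [← hcM, Finset.centerMass_eq_of_sum_1 _ _ hw1]
  have hrawsum : raw z = ∑ i ∈ t, (w i * ‖raw (zf i)‖) • lift (zf i) := by
    rw [raw_combo t w zf hw1 hsum]
    refine Finset.sum_congr rfl fun k _ => ?_
    show w k • raw (zf k) = (w k * ‖raw (zf k)‖) • (‖raw (zf k)‖⁻¹ • raw (zf k))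
    rw [smul_smul, mul_assoc, mul_inv_cancel₀ (norm_raw_pos (zf k)).ne', mul_one]
  intro K hK
  obtain ⟨hKc, hKs, hCK⟩ := hK
  have hmemK : ∀ i ∈ t, lift (zf i) ∈ K := by
    intro i hi
    obtain ⟨q, hq, hqe⟩ := hzf i hi
    exact hCK ⟨q, hq, by dsimp only at hqe ⊢; rw [hqe]⟩
  have h := normCombo_mem hKc hKs t (fun i => lift (zf i)) (fun i => w i * ‖raw (zf i)‖)
    (fun i hi => mul_nonneg (hw0 i hi) (norm_nonneg _)) hmemK hrawsum (raw_ne_zero z)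
  rw [hz]
  exact h

end
end DirA

open Real Set
open scoped RealInnerProductSpace Pointwise

/-- The spherical QST constant is at most the Euclidean one: a spherical QST with constant
`γ` yields the Euclidean QST with any constant `γ' < γ`. -/
theorem euclideanQST_from_sphericalQST (γ : ℝ) (hγ : γ ∈ Set.Ioc (0 : ℝ) 1)
    (sQST : ∀ d : ℕ, 2 ≤ d → ∀ C : Set (E (d + 1)), C ⊆ unitSphere (d + 1) →
      ∀ ρ ∈ Set.Ioo 0 (Real.pi / 2), cap (eLast d) ρ ⊆ sconv C →
        ∃ C' : Finset (E (d + 1)), ↑C' ⊆ C ∧ C'.card ≤ 2 * d ∧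
          cap (eLast d) (γ * ρ) ⊆ sconv (C' : Set (E (d + 1)))) :
    ∀ d : ℕ, 2 ≤ d → ∀ Q : Set (E d), Metric.closedBall 0 1 ⊆ convexHull ℝ Q →
      ∀ γ' : ℝ, γ' < γ →
        ∃ Q' : Finset (E d), ↑Q' ⊆ Q ∧ Q'.card ≤ 2 * d ∧
          Metric.closedBall 0 γ' ⊆ convexHull ℝ (Q' : Set (E d)) := by 
  intro d hd Q hQ γ' hγ'
  obtain ⟨hγ0, hγ1⟩ := hγ
  classical
  set t : ℝ := max (γ' / γ) 0 with ht
  have ht1 : t < 1 := max_lt ((div_lt_one hγ0).2 hγ') one_pos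
  have ht0 : 0 ≤ t := le_max_right _ _
  set ρ : ℝ := min (Real.arccos t) (π / 4) with hρdef
  have hρpos : 0 < ρ := lt_min (Real.arccos_pos.2 ht1) (by positivity)
  have hρlt : ρ < π / 2 := lt_of_le_of_lt (min_le_right _ _) (by linarith [Real.pi_pos])
  have hρ : ρ ∈ Set.Ioo 0 (π / 2) := ⟨hρpos, hρlt⟩
  have hγρ : γ * ρ ∈ Set.Ioo 0 (π / 2) := ⟨by positivity, by nlinarith⟩
  have hcosρ : t ≤ Real.cos ρ := by
    have := Real.cos_le_cos_of_nonneg_of_le_pi hρpos.le (Real.arccos_le_pi t) (min_le_left _ _)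
    rwa [Real.cos_arccos (by linarith : (-1:ℝ) ≤ t) ht1.le] at this
  have htan : 0 < Real.tan ρ := Real.tan_pos_of_pos_of_lt_pi_div_two hρ.1 hρ.2
  have hcosρpos : 0 < Real.cos ρ := Real.cos_pos_of_mem_Ioo ⟨by linarith [Real.pi_pos], hρlt⟩
  have hkey : γ' * Real.tan ρ ≤ Real.tan (γ * ρ) := by
    have h1 : γ' ≤ γ * Real.cos ρ := by
      have hm : γ' / γ ≤ t := le_max_left _ _
      calc γ' = (γ' / γ) * γ := by field_simp
        _ ≤ t * γ := by nlinarith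
        _ ≤ Real.cos ρ * γ := by nlinarith
        _ = γ * Real.cos ρ := mul_comm _ _
    have h2 : γ' * Real.tan ρ ≤ γ * Real.sin ρ := by
      have hh : γ' * Real.tan ρ ≤ (γ * Real.cos ρ) * Real.tan ρ := by nlinarith
      calc γ' * Real.tan ρ ≤ (γ * Real.cos ρ) * Real.tan ρ := hh
        _ = γ * Real.sin ρ := by
            rw [Real.tan_eq_sin_div_cos]; field_simp
    have h3 : γ * Real.sin ρ ≤ γ * ρ := by nlinarith [Real.sin_le hρpos.le]
    have h4 : γ * ρ ≤ Real.tan (γ * ρ) := (Real.lt_tan hγρ.1 hγρ.2).le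
    linarith
  set C : Set (E (d + 1)) := (fun q => lift (Real.tan ρ • q)) '' Q with hC
  have hCs : C ⊆ unitSphere (d + 1) := by rintro c ⟨q, -, rfl⟩; exact lift_mem_sphere _
  have hcap := cap_subset_sconv Q hQ hρ
  obtain ⟨C', hC'sub, hC'card, hC'cap⟩ := sQST d hd C hCs ρ hρ hcap
  have hpos : ∀ c ∈ C', 0 < ⟪c, eLast d⟫ := by
    intro c hc; obtain ⟨q, -, rfl⟩ := hC'sub hc; exact inner_lift_eLast_pos _
  have hC'sph : (C' : Set (E (d + 1))) ⊆ unitSphere (d + 1) := fun c hc => hCs (hC'sub hc)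
  set Q' : Finset (E d) := C'.image (fun c => (Real.tan ρ)⁻¹ • PN c) with hQ'
  refine ⟨Q', ?_, le_trans Finset.card_image_le hC'card, ?_⟩
  · intro q hq
    obtain ⟨c, hc, rfl⟩ := Finset.mem_image.1 hq
    obtain ⟨q0, hq0, rfl⟩ := hC'sub hc
    dsimp only
    rw [PN_lift, smul_smul, inv_mul_cancel₀ htan.ne', one_smul]
    exact hq0
  · intro y hy
    have hyn : ‖y‖ ≤ γ' := mem_closedBall_zero_iff.1 hy
    set z : E d := Real.tan ρ • y with hzdef
    have hzn : ‖z‖ ≤ Real.tan (γ * ρ) := by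
      rw [hzdef, norm_smul, Real.norm_eq_abs, abs_of_pos htan]
      calc Real.tan ρ * ‖y‖ ≤ Real.tan ρ * γ' := by nlinarith
        _ = γ' * Real.tan ρ := mul_comm _ _
        _ ≤ Real.tan (γ * ρ) := hkey
    have hmemcap : lift z ∈ cap (eLast d) (γ * ρ) := (cap_lift_iff hγρ z).2 hzn
    obtain ⟨w, hw, hne, heq⟩ := sconv_finset_subset C' hpos hC'sph (hC'cap hmemcap)
    have hz3 : z = PN (∑ c ∈ C', w c • c) := by
      rw [← PN_lift z, heq, PN_smul _ (inv_ne_zero (norm_pos_iff.2 hne).ne')]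
    have hz2 : z ∈ convexHull ℝ (PN '' (C' : Set (E (d + 1)))) := by
      rw [hz3]; exact PN_combo_mem_convexHull C' hpos w hw hne
    have himg : PN '' (C' : Set (E (d + 1))) ⊆ Real.tan ρ • (Q' : Set (E d)) := by
      rintro p ⟨c, hc, rfl⟩
      refine ⟨(Real.tan ρ)⁻¹ • PN c, ?_, ?_⟩
      · exact Finset.mem_coe.2 (Finset.mem_image_of_mem _ hc)
      · dsimp only; rw [smul_smul, mul_inv_cancel₀ htan.ne', one_smul]
    have hfin : z ∈ convexHull ℝ (Real.tan ρ • (Q' : Set (E d))) := convexHull_mono himg hz2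
    rw [convexHull_smul] at hfin
    exact (smul_mem_smul_set_iff₀ htan.ne' _ y).1 (by rwa [← hzdef])
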